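/- Let M ∈ ℝ^{n×n}, and let M_s := (M + Mᵀ)/2 denote its symmetric part. Suppose M_s is positive semidefinite. If (z¹, π¹) and (z², π²) are two solutions of the mixed linear complementarity problem MLCP(M, N, q, r), then M_s z¹ = M_s z². -/

import Mathlib

open Matrix

/-- A pair `(z, π)` is a solution of the mixed linear complementarity problem
`MLCP(M, N, q, r)`. -/
def IsMLCPSolution {n m : ℕ} (M : Matrix (Fin n) (Fin n) ℝ)
    (N : Matrix (Fin n) (Fin m) ℝ) (q : Fin n → ℝ) (r : Fin m → ℝ)
    (z : Fin n → ℝ) (π : Fin m → ℝ) : Prop :=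
  0 ≤ z ∧ 0 ≤ M.mulVec z + N.mulVec π + q ∧
    z ⬝ᵥ (M.mulVec z + N.mulVec π + q) = 0 ∧ N.transpose.mulVec z = r

/-- If the symmetric part `M_s := (M + Mᵀ)/2` of `M` is positive semidefinite,
then any two solutions `(z¹, π¹)` and `(z², π²)` of `MLCP(M, N, q, r)` satisfy
`M_s z¹ = M_s z²`. -/
theorem mlcp_symmetric_part_mulVec_unique {n m : ℕ} (M : Matrix (Fin n) (Fin n) ℝ)
    (N : Matrix (Fin n) (Fin m) ℝ) (q : Fin n → ℝ) (r : Fin m → ℝ)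
    (Ms : Matrix (Fin n) (Fin n) ℝ) (hMs : Ms = (2 : ℝ)⁻¹ • (M + M.transpose))
    (hpsd : ∀ x : Fin n → ℝ, 0 ≤ x ⬝ᵥ Ms.mulVec x)
    (z₁ z₂ : Fin n → ℝ) (π₁ π₂ : Fin m → ℝ)
    (h₁ : IsMLCPSolution M N q r z₁ π₁) (h₂ : IsMLCPSolution M N q r z₂ π₂) :
    Ms.mulVec z₁ = Ms.mulVec z₂ := by
  obtain ⟨hz₁, hw₁, hc₁, hN₁⟩ := h₁
  obtain ⟨hz₂, hw₂, hc₂, hN₂⟩ := h₂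
  set w₁ := M.mulVec z₁ + N.mulVec π₁ + q with hw1def
  set w₂ := M.mulVec z₂ + N.mulVec π₂ + q with hw2def
  have hMsPSD : Ms.PosSemidef := by
    constructor
    · rw [hMs]
      ext i j
      simp [Matrix.add_apply, Matrix.transpose_apply, add_comm]; ring
    · intro x
      simpa [dotProduct, mulVec, Finsupp.sum_fintype, Finset.mul_sum, mul_assoc] using hpsd x
  -- cross terms nonneg
  have hcross₁ : 0 ≤ z₁ ⬝ᵥ w₂ := dotProduct_nonneg_of_nonneg hz₁ hw₂
  have hcross₂ : 0 ≤ z₂ ⬝ᵥ w₁ := dotProduct_nonneg_of_nonneg hz₂ hw₁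
  set d := z₁ - z₂ with hd
  -- dᵀ N π = 0 for any π with Nᵀ d = 0
  have hNd : N.transpose.mulVec d = 0 := by
    simp [hd, Matrix.mulVec_sub, hN₁, hN₂]
  have hdNπ : ∀ π : Fin m → ℝ, d ⬝ᵥ N.mulVec π = 0 := by
    intro π
    have : d ⬝ᵥ N.mulVec π = (N.transpose.mulVec d) ⬝ᵥ π := by
      rw [Matrix.dotProduct_mulVec, ← Matrix.mulVec_transpose]
    rw [this, hNd, zero_dotProduct]
  -- d ⬝ M d = d ⬝ (w₁ - w₂)
  have hMd : d ⬝ᵥ M.mulVec d = d ⬝ᵥ (w₁ - w₂) := by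
    have : w₁ - w₂ = M.mulVec d + (N.mulVec π₁ - N.mulVec π₂) := by
      rw [hw1def, hw2def, hd, Matrix.mulVec_sub]; abel
    rw [this, dotProduct_add, dotProduct_sub, hdNπ, hdNπ]
    ring
  have hle : d ⬝ᵥ M.mulVec d ≤ 0 := by
    rw [hMd, hd]
    have : (z₁ - z₂) ⬝ᵥ (w₁ - w₂) =
        z₁ ⬝ᵥ w₁ + z₂ ⬝ᵥ w₂ - (z₁ ⬝ᵥ w₂ + z₂ ⬝ᵥ w₁) := by
      simp [dotProduct_sub, sub_dotProduct]; ring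
    rw [this, hc₁, hc₂]
    linarith
  -- d ⬝ Ms d = d ⬝ M d
  have hMsM : d ⬝ᵥ Ms.mulVec d = d ⬝ᵥ M.mulVec d := by
    have hT : d ⬝ᵥ M.transpose.mulVec d = d ⬝ᵥ M.mulVec d := by
      rw [Matrix.mulVec_transpose, Matrix.dotProduct_mulVec, dotProduct_comm]
    rw [hMs, Matrix.smul_mulVec, dotProduct_smul, Matrix.add_mulVec,
      dotProduct_add, hT, smul_eq_mul]
    ring
  have hzero : d ⬝ᵥ Ms.mulVec d = 0 := le_antisymm (hMsM ▸ hle) (hpsd d)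
  have hMsd : Ms.mulVec d = 0 := by
    have := (hMsPSD.dotProduct_mulVec_zero_iff d).mp (by simpa using hzero)
    simpa using this
  have : Ms.mulVec z₁ - Ms.mulVec z₂ = 0 := by
    rw [← Matrix.mulVec_sub]; exact hMsd
  exact sub_eq_zero.mp this
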